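/- Every quadratic form φ ∈ I²F of dimension d is Witt equivalent to a sum of at most d/2 − 1 forms similar to 2-fold Pfister forms. -/

import Mathlib

namespace PN

variable (F : Type*) [Field F]

/-- The diagonal quadratic form with diagonal entries given by a list. -/
noncomputable def qf (l : List F) : QuadraticForm F (Fin l.length → F) :=
  QuadraticMap.weightedSumSquares F l.get

/-- Isometry of diagonal quadratic forms. -/
def Isom (l l' : List F) : Prop :=
  Nonempty (QuadraticMap.IsometryEquiv (qf F l) (qf F l'))

/-- Diagonalization of the sum of `k` hyperbolic planes. -/
def hypList (k : ℕ) : List F :=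
  List.replicate k (1 : F) ++ List.replicate k (-1 : F)

/-- A (diagonalized) form is hyperbolic if it is isometric to a sum of hyperbolic planes. -/
def IsHyp (l : List F) : Prop := ∃ k : ℕ, Isom F l (hypList F k)

def negList (l : List F) : List F := l.map (fun x => -x)

/-- Witt equivalence of diagonalized quadratic forms. -/
def WittEquiv (l l' : List F) : Prop := IsHyp F (l ++ negList F l')

/-- Nondegeneracy: all diagonal entries are nonzero. -/
def Nondeg (l : List F) : Prop := ∀ x ∈ l, x ≠ 0

/-- Diagonalization of the Pfister form `⟪a₁,…,aₙ⟫ = ⟨1,-a₁⟩⊗⋯⊗⟨1,-aₙ⟩`. -/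
def pfister : List F → List F
  | [] => [1]
  | a :: l => pfister l ++ (pfister l).map (fun x => -a * x)

/-- `l` is a diagonalization of an `n`-fold Pfister form. -/
def IsPfister (n : ℕ) (l : List F) : Prop :=
  ∃ a : Fin n → F, (∀ i, a i ≠ 0) ∧ l = pfister F (List.ofFn a)

/-- `l` is a diagonalization of a form similar to an `n`-fold Pfister form. -/
def IsGP (n : ℕ) (l : List F) : Prop :=
  ∃ c : F, c ≠ 0 ∧ ∃ p : List F, IsPfister F n p ∧ l = p.map (fun x => c * x)

/-- The Witt class of `l` lies in `IⁿF`, i.e. it is a sum of classes of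
forms similar to `n`-fold Pfister forms. -/
def InI (n : ℕ) (l : List F) : Prop :=
  ∃ L : List (List F), (∀ p ∈ L, IsGP F n p) ∧ WittEquiv F l L.flatten

/-- The (scaled) `n`-Pfister number of `l` (`⊤` if the Witt class of `l` is not in `IⁿF`). -/
noncomputable def GPnum (n : ℕ) (l : List F) : ℕ∞ :=
  sInf {k : ℕ∞ | ∃ L : List (List F), (L.length : ℕ∞) = k ∧
    (∀ p ∈ L, IsGP F n p) ∧ WittEquiv F l L.flatten}

/-- The unscaled `n`-Pfister number: least number of genuine `n`-fold Pfister
forms with signs `±1` whose Witt classes sum to that of `l`. -/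
noncomputable def Pnum (n : ℕ) (l : List F) : ℕ∞ :=
  sInf {k : ℕ∞ | ∃ L : List (List F), (L.length : ℕ∞) = k ∧
    (∀ p ∈ L, IsPfister F n p ∨ ∃ q : List F, IsPfister F n q ∧ p = negList F q) ∧
    WittEquiv F l L.flatten}

/-- `GP_n(F, d)`: the supremum of `n`-Pfister numbers of forms in `IⁿF` of dimension `≤ d`. -/
noncomputable def GPsup (n : ℕ) (d : ℕ) : ℕ∞ :=
  ⨆ l ∈ {l : List F | Nondeg F l ∧ InI F n l ∧ l.length ≤ d}, GPnum F n l

/-- `a` is a nonzero value represented by the form `l`. -/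
def Represents (l : List F) (a : F) : Prop := a ≠ 0 ∧ ∃ x, qf F l x = a

/-- The set of nonzero represented values. -/
def D (l : List F) : Set F := {a | Represents F l a}

def Anisotropic (l : List F) : Prop := (qf F l).Anisotropic

def SameSquareClass (a b : F) : Prop := ∃ c : F, c ≠ 0 ∧ a = b * c ^ 2

/-- A field is rigid if every anisotropic binary form represents at most two square classes. -/
def Rigid : Prop := ∀ x y : F, x ≠ 0 → y ≠ 0 → Anisotropic F [x, y] →
  ∃ u v : F, ∀ a : F, Represents F [x, y] a →
    SameSquareClass F a u ∨ SameSquareClass F a v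

/-- The level `s(F)`: the least `n` such that `-1` is a sum of `n` squares (`⊤` if none). -/
noncomputable def level : ℕ∞ :=
  sInf {m : ℕ∞ | ∃ n : ℕ, m = (n : ℕ∞) ∧ ∃ f : Fin n → F, (-1 : F) = ∑ i, f i ^ 2}

/-- `l` is (isometric to) a subform of `l'`. -/
def Subform (l l' : List F) : Prop := ∃ r : List F, Isom F l' (l ++ r)

end PN

namespace PN

variable {F : Type*} [Field F]

/-! ### Basic Isom lemmas -/

lemma isom_refl (l : List F) : Isom F l l := ⟨QuadraticMap.IsometryEquiv.refl _⟩

lemma isom_symm {l l' : List F} (h : Isom F l l') : Isom F l' l :=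
  h.elim fun e => ⟨e.symm⟩

lemma isom_trans {l₁ l₂ l₃ : List F} (h : Isom F l₁ l₂) (h' : Isom F l₂ l₃) : Isom F l₁ l₃ :=
  h.elim fun e => h'.elim fun e' => ⟨e.trans e'⟩

/-- reindexing + multiplying entries by squares gives an isometry -/
lemma isom_of_equiv {l l' : List F} (e : Fin l'.length ≃ Fin l.length)
    (u : Fin l'.length → F) (hu : ∀ i, u i ≠ 0)
    (h : ∀ i, l.get (e i) = l'.get i * (u i) ^ 2) : Isom F l l' := by
  refine ⟨⟨⟨⟨⟨fun x => fun i => u i * x (e i), ?_⟩, ?_⟩,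
      fun y => fun j => (u (e.symm j))⁻¹ * y (e.symm j), ?_, ?_⟩, ?_⟩⟩
  · intro x y; funext i; simp [mul_add]
  · intro c x; funext i; simp only [Pi.smul_apply, smul_eq_mul, RingHom.id_apply]; ring
  · intro x; funext j
    simp only []
    rw [Equiv.apply_symm_apply, ← mul_assoc, inv_mul_cancel₀ (hu _), one_mul]
  · intro y; funext i
    simp only []
    rw [Equiv.symm_apply_apply, ← mul_assoc, mul_inv_cancel₀ (hu _), one_mul]
  · intro x
    show qf F l' (fun i => u i * x (e i)) = qf F l x
    rw [qf, qf, QuadraticMap.weightedSumSquares_apply, QuadraticMap.weightedSumSquares_apply]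
    rw [← Equiv.sum_comp e (fun j => l.get j • (x j * x j))]
    refine Finset.sum_congr rfl fun i _ => ?_
    rw [h i]; simp only [smul_eq_mul]; ring

lemma perm_get_equiv {l l' : List F} (h : l.Perm l') :
    ∃ e : Fin l'.length ≃ Fin l.length, ∀ i, l.get (e i) = l'.get i := by
  induction h with
  | nil => exact ⟨Equiv.refl _, fun i => i.elim0⟩
  | cons x _ ih =>
      obtain ⟨e, he⟩ := ih
      refine ⟨(finSuccEquiv _).trans ((Equiv.optionCongr e).trans (finSuccEquiv _).symm),
        fun i => ?_⟩
      induction i using Fin.cases with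
      | zero => simp
      | succ j => simpa using he j
  | swap x y l =>
      refine ⟨Equiv.swap ⟨0, by simp⟩ ⟨1, by simp⟩, fun i => ?_⟩
      rcases i with ⟨iv, hi⟩
      match iv, hi with
      | 0, hi => simp [Equiv.swap_apply_def, Fin.ext_iff]
      | 1, hi => simp [Equiv.swap_apply_def, Fin.ext_iff]
      | (n+2), hi => simp [Equiv.swap_apply_def, Fin.ext_iff]
  | trans _ _ ih₁ ih₂ =>
      obtain ⟨e₁, he₁⟩ := ih₁
      obtain ⟨e₂, he₂⟩ := ih₂
      exact ⟨e₂.trans e₁, fun i => by rw [Equiv.trans_apply, he₁, he₂]⟩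

lemma isom_of_perm {l l' : List F} (h : l.Perm l') : Isom F l l' := by
  obtain ⟨e, he⟩ := perm_get_equiv h
  exact isom_of_equiv e (fun _ => 1) (fun _ => one_ne_zero) (fun i => by rw [he i]; ring)

lemma isom_of_forall₂ {l l' : List F} (h : List.Forall₂ (SameSquareClass F) l l') :
    Isom F l l' := by
  rcases List.forall₂_iff_get.mp h with ⟨hlen, hget⟩
  have key : ∀ i : Fin l'.length, SameSquareClass F (l.get (finCongr hlen.symm i)) (l'.get i) := by
    intro i
    exact hget i.val (by omega) i.isLt
  exact isom_of_equiv (finCongr hlen.symm) (fun i => Classical.choose (key i))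
    (fun i => (Classical.choose_spec (key i)).1)
    (fun i => (Classical.choose_spec (key i)).2)

lemma isom_sp {l l'' l' : List F} (hp : l.Perm l'')
    (hf : List.Forall₂ (SameSquareClass F) l'' l') : Isom F l l' :=
  isom_trans (isom_of_perm hp) (isom_of_forall₂ hf)

/-! ### Append -/

lemma isom_append_prod (l₁ l₂ : List F) :
    Nonempty (QuadraticMap.IsometryEquiv (qf F (l₁ ++ l₂)) ((qf F l₁).prod (qf F l₂))) := by
  have hlen : (l₁ ++ l₂).length = l₁.length + l₂.length := List.length_append
  let eFin : Fin ((l₁ ++ l₂).length) ≃ (Fin l₁.length ⊕ Fin l₂.length) :=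
    (finCongr hlen).trans finSumFinEquiv.symm
  refine ⟨⟨(LinearEquiv.funCongrLeft F F eFin.symm).trans
      (LinearEquiv.sumArrowLequivProdArrow _ _ F F), ?_⟩⟩
  intro x
  show qf F l₁ (fun a => x (eFin.symm (Sum.inl a))) + qf F l₂ (fun b => x (eFin.symm (Sum.inr b)))
      = qf F (l₁ ++ l₂) x
  rw [qf, qf, qf, QuadraticMap.weightedSumSquares_apply, QuadraticMap.weightedSumSquares_apply,
    QuadraticMap.weightedSumSquares_apply]
  rw [← Equiv.sum_comp eFin.symm (fun k => (l₁ ++ l₂).get k • (x k * x k)), Fintype.sum_sum_type]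
  congr 1
  · refine Finset.sum_congr rfl fun a _ => ?_
    congr 1
    show l₁.get a = (l₁ ++ l₂).get (Fin.cast hlen.symm (Fin.castAdd _ a))
    simp [List.get_eq_getElem, List.getElem_append_left]
  · refine Finset.sum_congr rfl fun b _ => ?_
    congr 1
    show l₂.get b = (l₁ ++ l₂).get (Fin.cast hlen.symm (Fin.natAdd _ b))
    simp [List.get_eq_getElem, List.getElem_append_right]

lemma isom_append {l₁ l₂ l₁' l₂' : List F} (h₁ : Isom F l₁ l₁') (h₂ : Isom F l₂ l₂') :
    Isom F (l₁ ++ l₂) (l₁' ++ l₂') := by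
  obtain ⟨E⟩ := isom_append_prod (F := F) l₁ l₂
  obtain ⟨E'⟩ := isom_append_prod (F := F) l₁' l₂'
  obtain ⟨e₁⟩ := h₁
  obtain ⟨e₂⟩ := h₂
  exact ⟨(E.trans (QuadraticMap.IsometryEquiv.prod e₁ e₂)).trans E'.symm⟩

/-! ### The hyperbolic plane -/

lemma isom_pair (h2 : (2 : F) ≠ 0) {x : F} (hx : x ≠ 0) :
    Isom F [x, -x] [(1 : F), -1] := by
  have key : Nonempty (QuadraticMap.IsometryEquiv
      (QuadraticMap.weightedSumSquares F (![x, -x] : Fin 2 → F))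
      (QuadraticMap.weightedSumSquares F (![1, -1] : Fin 2 → F))) := by
    let A : Matrix (Fin 2) (Fin 2) F := !![(x+1)/2, (x-1)/2; (x-1)/2, (x+1)/2]
    let B : Matrix (Fin 2) (Fin 2) F := !![x⁻¹*((x+1)/2), x⁻¹*(-((x-1)/2));
      x⁻¹*(-((x-1)/2)), x⁻¹*((x+1)/2)]
    have hAB : A * B = 1 := by
      ext i j
      fin_cases i <;> fin_cases j <;>
        simp [A, B, Matrix.mul_apply, Fin.sum_univ_two] <;>
        · field_simp
          ring
    have hBA : B * A = 1 := by
      ext i j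
      fin_cases i <;> fin_cases j <;>
        simp [A, B, Matrix.mul_apply, Fin.sum_univ_two] <;>
        · field_simp
          ring
    refine ⟨⟨LinearEquiv.ofLinear (Matrix.toLin' A) (Matrix.toLin' B) ?_ ?_, ?_⟩⟩
    · rw [← Matrix.toLin'_mul, hAB, Matrix.toLin'_one]
    · rw [← Matrix.toLin'_mul, hBA, Matrix.toLin'_one]
    · intro v
      show QuadraticMap.weightedSumSquares F (![1, -1] : Fin 2 → F) ((Matrix.toLin' A) v)
          = QuadraticMap.weightedSumSquares F (![x, -x] : Fin 2 → F) v
      rw [QuadraticMap.weightedSumSquares_apply, QuadraticMap.weightedSumSquares_apply]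
      rw [Fin.sum_univ_two, Fin.sum_univ_two]
      simp only [Matrix.toLin'_apply, Matrix.mulVec, dotProduct, Fin.sum_univ_two,
        smul_eq_mul, Matrix.cons_val_zero, Matrix.cons_val_one, Matrix.head_cons,
        Matrix.of_apply, Matrix.cons_val', Matrix.empty_val', Matrix.cons_val_fin_one,
        Matrix.head_fin_const, A]
      field_simp
      ring
  have h1 : qf F [x, -x] = QuadraticMap.weightedSumSquares F (![x, -x] : Fin 2 → F) := by
    apply congrArg
    funext i
    fin_cases i <;> rfl
  have h2' : qf F [(1 : F), -1] = QuadraticMap.weightedSumSquares F (![1, -1] : Fin 2 → F) := by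
    apply congrArg
    funext i
    fin_cases i <;> rfl
  rw [Isom, h1, h2']
  exact key

lemma hypList_append (a b : ℕ) :
    Isom F (hypList F a ++ hypList F b) (hypList F (a + b)) := by
  apply isom_of_perm
  rw [hypList, hypList, hypList, List.replicate_add, List.replicate_add,
    List.append_assoc, List.append_assoc]
  exact (List.perm_append_comm_assoc _ _ _).append_left _

lemma isHyp_of_isom {l l' : List F} (h : Isom F l l') (h' : IsHyp F l') : IsHyp F l := by
  obtain ⟨k, hk⟩ := h'
  exact ⟨k, isom_trans h hk⟩

lemma isHyp_pair_cons (h2 : (2 : F) ≠ 0) {x : F} (hx : x ≠ 0) {t : List F}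
    (ht : IsHyp F t) : IsHyp F ([x, -x] ++ t) := by
  obtain ⟨k, hk⟩ := ht
  refine ⟨1 + k, isom_trans (isom_append ?_ hk) (hypList_append 1 k)⟩
  have : hypList F 1 = [(1:F), -1] := rfl
  rw [this]
  exact isom_pair h2 hx

lemma isHyp_nil : IsHyp F ([] : List F) := ⟨0, isom_refl _⟩

/-! ### Discriminant invariance -/

lemma toMatrix'_wss [Invertible (2 : F)] {n : ℕ} (w : Fin n → F) :
    QuadraticForm.toMatrix' (QuadraticMap.weightedSumSquares F w) = Matrix.diagonal w := by
  classical
  set B : (Fin n → F) →ₗ[F] (Fin n → F) →ₗ[F] F := Matrix.toLinearMap₂' F (Matrix.diagonal w) with hB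
  have happly : ∀ p q : Fin n → F, B p q = ∑ i, w i * p i * q i := by
    intro p q
    rw [hB, Matrix.toLinearMap₂'_apply']
    simp only [dotProduct, Matrix.mulVec_diagonal]
    refine Finset.sum_congr rfl fun i _ => ?_
    ring
  have hsymm : B.IsSymm := by
    constructor
    intro p q
    simp only [RingHom.id_apply, happly]
    refine Finset.sum_congr rfl fun i _ => ?_
    ring
  have hBQ : LinearMap.BilinMap.toQuadraticMap B = QuadraticMap.weightedSumSquares F w := by
    ext x
    rw [LinearMap.BilinMap.toQuadraticMap_apply, happly,
      QuadraticMap.weightedSumSquares_apply]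
    refine Finset.sum_congr rfl fun i _ => ?_
    rw [smul_eq_mul]; ring
  rw [QuadraticForm.toMatrix', ← hBQ,
    QuadraticMap.associated_left_inverse _ hsymm.eq, hB,
    LinearMap.toMatrix'_toLinearMap₂']

lemma discr_wss [Invertible (2 : F)] {n : ℕ} (w : Fin n → F) :
    QuadraticForm.discr' (QuadraticMap.weightedSumSquares F w) = ∏ i, w i := by
  rw [QuadraticForm.discr', toMatrix'_wss, Matrix.det_diagonal]

lemma isom_length {l l' : List F} (h : Isom F l l') : l.length = l'.length := by
  obtain ⟨e⟩ := h
  have h1 := e.toLinearEquiv.finrank_eq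
  rwa [Module.finrank_fin_fun, Module.finrank_fin_fun] at h1

lemma isom_prod (h2 : (2 : F) ≠ 0) {l l' : List F} (h : Isom F l l') :
    ∃ u : F, u ≠ 0 ∧ l.prod = u ^ 2 * l'.prod := by
  haveI := invertibleOfNonzero h2
  obtain ⟨e⟩ := h
  have hlen : l.length = l'.length := isom_length ⟨e⟩
  set w' : Fin l.length → F := fun i => l'.get (finCongr hlen i) with hw'
  let R : (Fin l'.length → F) ≃ₗ[F] (Fin l.length → F) :=
    LinearEquiv.funCongrLeft F F (finCongr hlen)
  let G : (Fin l.length → F) ≃ₗ[F] (Fin l.length → F) := e.toLinearEquiv.trans R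
  have key : qf F l = (QuadraticMap.weightedSumSquares F w').comp G.toLinearMap := by
    ext x
    have hGx : ((QuadraticMap.weightedSumSquares F w').comp G.toLinearMap) x
        = ∑ i, w' i • (e x (finCongr hlen i) * e x (finCongr hlen i)) := by
      rw [show ((QuadraticMap.weightedSumSquares F w').comp G.toLinearMap) x
        = QuadraticMap.weightedSumSquares F w' (fun i => e x (finCongr hlen i)) from rfl,
        QuadraticMap.weightedSumSquares_apply]
    rw [hGx, ← e.map_app x]
    rw [show qf F l' (e x) = ∑ j, l'.get j • (e x j * e x j) from
      QuadraticMap.weightedSumSquares_apply _ _]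
    exact (Equiv.sum_comp (finCongr hlen) (fun j => l'.get j • (e x j * e x j))).symm
  set d : F := (LinearMap.toMatrix' G.toLinearMap).det with hd
  have hdet : d ≠ 0 := by
    have hcomp : G.toLinearMap ∘ₗ G.symm.toLinearMap = LinearMap.id := by
      ext x
      simp
    have h4 : (LinearMap.toMatrix' G.toLinearMap) * (LinearMap.toMatrix' G.symm.toLinearMap)
        = 1 := by
      rw [← LinearMap.toMatrix'_comp, hcomp, LinearMap.toMatrix'_id]
    intro h0
    have := congrArg Matrix.det h4
    rw [Matrix.det_mul, Matrix.det_one, ← hd, h0, zero_mul] at this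
    exact zero_ne_one this
  have hdiscr : QuadraticForm.discr' (qf F l) = d * d * QuadraticForm.discr' (QuadraticMap.weightedSumSquares F w') := by
    rw [key]
    exact QuadraticForm.discr'_comp _
  rw [show (qf F l) = QuadraticMap.weightedSumSquares F l.get from rfl] at hdiscr
  rw [discr_wss, discr_wss] at hdiscr
  have hl : l.prod = ∏ i, l.get i := by
    have h5 := List.prod_ofFn (f := l.get)
    rwa [List.ofFn_get] at h5
  have hl' : l'.prod = ∏ i, w' i := by
    have h5 := List.prod_ofFn (f := l'.get)
    rw [List.ofFn_get] at h5
    rw [h5]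
    exact (Equiv.prod_comp (finCongr hlen) (fun j => l'.get j)).symm
  exact ⟨d, hdet, by rw [hl, hl', hdiscr, sq]⟩

/-! ### List invariants -/

lemma negList_length (l : List F) : (negList F l).length = l.length := by
  simp [negList]

lemma negList_prod (l : List F) : (negList F l).prod = (-1 : F) ^ l.length * l.prod := by
  induction l with
  | nil => simp [negList]
  | cons a t ih =>
      simp only [negList, List.map_cons, List.prod_cons, List.length_cons] at *
      rw [ih, pow_succ]
      ring

lemma hypList_length (k : ℕ) : (hypList F k).length = 2 * k := by
  simp [hypList]; ring

lemma hypList_prod (k : ℕ) : (hypList F k).prod = (-1 : F) ^ k := by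
  simp [hypList, List.prod_replicate]

lemma ofFn_two (a : Fin 2 → F) : List.ofFn a = [a 0, a 1] := by
  simp [List.ofFn_succ]

lemma pfister_two (x y : F) : pfister F [x, y] = [1, -y * 1, -x * 1, -x * (-y * 1)] := by
  simp [pfister]

lemma gp2_length {p : List F} (h : IsGP F 2 p) : p.length = 4 := by
  obtain ⟨c, hc, q, ⟨a, ha, hq⟩, hp⟩ := h
  rw [hp, hq, ofFn_two, pfister_two]
  rfl

lemma gp2_prod {p : List F} (h : IsGP F 2 p) : ∃ u : F, u ≠ 0 ∧ p.prod = u ^ 2 := by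
  obtain ⟨c, hc, q, ⟨a, ha, hq⟩, hp⟩ := h
  refine ⟨c ^ 2 * (a 0 * a 1), mul_ne_zero (pow_ne_zero _ hc) (mul_ne_zero (ha 0) (ha 1)), ?_⟩
  rw [hp, hq, ofFn_two, pfister_two]
  simp [List.prod_cons]
  ring

lemma flatten_length {L : List (List F)} (h : ∀ p ∈ L, IsGP F 2 p) :
    L.flatten.length = 4 * L.length := by
  induction L with
  | nil => simp
  | cons p T ih =>
      simp only [List.flatten_cons, List.length_append, List.length_cons]
      rw [ih (fun q hq => h q (List.mem_cons_of_mem _ hq)), gp2_length (h p (List.mem_cons_self))]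
      ring

lemma flatten_prod {L : List (List F)} (h : ∀ p ∈ L, IsGP F 2 p) :
    ∃ u : F, u ≠ 0 ∧ L.flatten.prod = u ^ 2 := by
  induction L with
  | nil => exact ⟨1, one_ne_zero, by simp⟩
  | cons p T ih =>
      obtain ⟨u, hu, hT⟩ := ih (fun q hq => h q (List.mem_cons_of_mem _ hq))
      obtain ⟨v, hv, hp⟩ := gp2_prod (h p (List.mem_cons_self))
      refine ⟨v * u, mul_ne_zero hv hu, ?_⟩
      rw [List.flatten_cons, List.prod_append, hT, hp]
      ring

lemma key_invariant (h2 : (2 : F) ≠ 0) {φ : List F} (hI : InI F 2 φ) :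
    ∃ m : ℕ, φ.length = 2 * m ∧ ∃ e : F, e ≠ 0 ∧ (-1 : F) ^ m * φ.prod = e ^ 2 := by
  obtain ⟨L, hGP, k, hiso⟩ := hI
  have hlen := isom_length hiso
  rw [List.length_append, negList_length, flatten_length hGP, hypList_length] at hlen
  -- φ.length + 4 * L.length = 2 * k
  have hk2 : 2 * L.length ≤ k := by omega
  refine ⟨k - 2 * L.length, by omega, ?_⟩
  obtain ⟨u, hu, hprod⟩ := isom_prod h2 hiso
  rw [List.prod_append, negList_prod, flatten_length hGP, hypList_prod] at hprod
  obtain ⟨s, hs, hflat⟩ := flatten_prod hGP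
  rw [hflat] at hprod
  -- hprod : φ.prod * ((-1)^(4*L.length) * s^2) = u^2 * (-1)^k
  have hm1 : ((-1 : F)) ^ (4 * L.length) = 1 := by
    rw [pow_mul]
    norm_num
  rw [hm1, one_mul] at hprod
  set m := k - 2 * L.length with hm
  have hk : k = m + 2 * L.length := by omega
  refine ⟨u * (-1) ^ L.length / s, by
    apply div_ne_zero
    apply mul_ne_zero hu
    exact pow_ne_zero _ (by norm_num)
    exact hs, ?_⟩
  have hps : s ≠ 0 := hs
  field_simp
  -- goal: (-1)^m * φ.prod * s^2 = (u * (-1)^L.length)^2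
  rw [hk, pow_add, pow_mul] at hprod
  have : φ.prod * s ^ 2 = u ^ 2 * ((-1 : F) ^ m * (((-1 : F) ^ 2) ^ L.length)) := hprod
  rw [show ((-1 : F) ^ 2) = 1 by norm_num, one_pow, mul_one] at this
  calc (-1 : F) ^ m * φ.prod * s ^ 2 = (-1 : F) ^ m * (φ.prod * s ^ 2) := by ring
    _ = (-1 : F) ^ m * (u ^ 2 * (-1 : F) ^ m) := by rw [this]
    _ = ((-1 : F) ^ m) ^ 2 * u ^ 2 := by ring
    _ = ((-1 : F) ^ 2) ^ m * u ^ 2 := by rw [← pow_mul, ← pow_mul, Nat.mul_comm]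
    _ = (u * (-1) ^ L.length) ^ 2 := by
        rw [show ((-1 : F) ^ 2) = 1 by norm_num, one_pow, one_mul]
        rw [mul_pow, ← pow_mul, Nat.mul_comm L.length 2, pow_mul]
        rw [show ((-1 : F) ^ 2) = 1 by norm_num, one_pow, mul_one]
      _ = u ^ 2 * ((-1 : F) ^ L.length) ^ 2 := by ring

/-! ### Main recursion -/

lemma sqcl_refl (x : F) : SameSquareClass F x x := ⟨1, one_ne_zero, by ring⟩

lemma main_rec (h2 : (2 : F) ≠ 0) :
    ∀ n : ℕ, ∀ r : List F, r.length = n → ∀ c : F, c ≠ 0 → Nondeg F r → n % 2 = 1 →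
    (∃ e : F, e ≠ 0 ∧ (-1 : F) ^ ((n + 1) / 2) * (c * r.prod) = e ^ 2) →
    ∃ L : List (List F), L.length = (n - 1) / 2 ∧ (∀ p ∈ L, IsGP F 2 p) ∧
      IsHyp F ((c :: r) ++ negList F (L.flatten)) := by
  intro n
  induction n using Nat.strong_induction_on with
  | _ n ih =>
    intro r hr c hc hnd hodd hsq
    match r with
    | [] => rw [List.length_nil] at hr; omega
    | [b] =>
      rw [List.length_cons, List.length_nil] at hr
      obtain ⟨e, he, hsq⟩ := hsq
      rw [← hr] at hodd hsq ⊢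
      norm_num at hsq
      -- hsq : -(c * b) = e ^ 2  (hopefully)
      have hb : b ≠ 0 := hnd b (by simp)
      have hscl : SameSquareClass F b (-c) := by
        refine ⟨e / c, div_ne_zero he hc, ?_⟩
        field_simp
        linear_combination (-1) * hsq
      refine ⟨[], by norm_num, by simp, ?_⟩
      have hhyp : IsHyp F ([c, -c] ++ ([] : List F)) := isHyp_pair_cons h2 hc isHyp_nil
      rw [List.append_nil] at hhyp
      have hiso : Isom F ((c :: [b]) ++ negList F ([] : List (List F)).flatten) [c, -c] := by
        rw [show negList F ([] : List (List F)).flatten = [] from rfl, List.append_nil]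
        exact isom_of_forall₂ ((List.forall₂_cons.2 ⟨sqcl_refl c,
          List.forall₂_cons.2 ⟨hscl, List.Forall₂.nil⟩⟩))
      exact isHyp_of_isom hiso hhyp
    | b :: b' :: r' =>
      rw [List.length_cons, List.length_cons] at hr
      have hb : b ≠ 0 := hnd b (by simp)
      have hb' : b' ≠ 0 := hnd b' (by simp)
      have hndr' : Nondeg F r' := fun x hx => hnd x (by simp [hx])
      set c' : F := -(c * b * b') with hc'def
      have hc' : c' ≠ 0 := by
        rw [hc'def]
        exact neg_ne_zero.2 (mul_ne_zero (mul_ne_zero hc hb) hb')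
      obtain ⟨e, he, hsq⟩ := hsq
      have hpow : (n + 1) / 2 = (r'.length + 1) / 2 + 1 := by omega
      have hsq' : (-1 : F) ^ ((r'.length + 1) / 2) * (c' * r'.prod) = e ^ 2 := by
        rw [hpow, pow_succ] at hsq
        rw [List.prod_cons, List.prod_cons] at hsq
        rw [hc'def]
        linear_combination hsq
      obtain ⟨L', hL'len, hL'gp, hL'hyp⟩ := ih r'.length (by omega) r' rfl c' hc' hndr'
        (by omega) ⟨e, he, hsq'⟩
      -- the Pfister form
      set τ : List F := (pfister F [-(c * b), -(c * b')]).map (fun z => c * z) with hτdef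
      have hτgp : IsGP F 2 τ := by
        refine ⟨c, hc, pfister F [-(c * b), -(c * b')], ⟨![-(c * b), -(c * b')], ?_, ?_⟩, rfl⟩
        · intro i
          fin_cases i
          · exact neg_ne_zero.2 (mul_ne_zero hc hb)
          · exact neg_ne_zero.2 (mul_ne_zero hc hb')
        · rw [ofFn_two]
          norm_num
      refine ⟨τ :: L', by simp [hL'len]; omega, ?_, ?_⟩
      · intro p hp
        rcases List.mem_cons.1 hp with h | h
        · rw [h]; exact hτgp
        · exact hL'gp p h
      -- the isometry
      set NF : List F := negList F L'.flatten with hNFdef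
      set A1 : F := -c with hA1
      set A2 : F := -(c ^ 2 * b') with hA2
      set A3 : F := -(c ^ 2 * b) with hA3
      set A4 : F := -(c ^ 3 * (b * b')) with hA4
      have hneg : negList F τ = [A1, A2, A3, A4] := by
        rw [hτdef, pfister_two, negList]
        simp only [List.map_cons, List.map_map, List.map_nil]
        rw [hA1, hA2, hA3, hA4]
        norm_num
        refine ⟨by ring, by ring, by ring⟩
      have hW : negList F ((τ :: L').flatten) = A1 :: A2 :: A3 :: A4 :: NF := by
        rw [List.flatten_cons, negList, List.map_append, ← negList, ← negList, hneg, hNFdef]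
        rfl
      set Z : List F := r' ++ NF with hZ
      -- permutation to l''
      have hperm : ((c :: b :: b' :: r') ++ negList F ((τ :: L').flatten)).Perm
          (c :: A1 :: b :: A3 :: b' :: A2 :: A4 :: Z) := by
        rw [hW]
        show (c :: b :: b' :: (r' ++ (A1 :: A2 :: A3 :: A4 :: NF))).Perm _
        have p4 : (r' ++ (A4 :: NF)).Perm (A4 :: Z) := List.perm_middle
        have p3 : (r' ++ (A3 :: A4 :: NF)).Perm (A3 :: A4 :: Z) :=
          List.perm_middle.trans (p4.cons A3)
        have p2 : (r' ++ (A2 :: A3 :: A4 :: NF)).Perm (A2 :: A3 :: A4 :: Z) :=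
          List.perm_middle.trans (p3.cons A2)
        have p1 : (r' ++ (A1 :: A2 :: A3 :: A4 :: NF)).Perm (A1 :: A2 :: A3 :: A4 :: Z) :=
          List.perm_middle.trans (p2.cons A1)
        refine (((p1.cons b').cons b).cons c).trans ?_
        -- c :: b :: b' :: A1 :: A2 :: A3 :: A4 :: Z ~ c :: A1 :: b :: A3 :: b' :: A2 :: A4 :: Z
        refine List.Perm.cons c ?_
        -- b :: b' :: A1 :: A2 :: A3 :: A4 :: Z ~ A1 :: b :: A3 :: b' :: A2 :: A4 :: Z
        have q1 : (b :: b' :: A1 :: A2 :: A3 :: A4 :: Z).Perm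
            (b :: A1 :: b' :: A2 :: A3 :: A4 :: Z) :=
          (List.Perm.swap A1 b' (A2 :: A3 :: A4 :: Z)).cons b
        have q2 : (b :: A1 :: b' :: A2 :: A3 :: A4 :: Z).Perm
            (A1 :: b :: b' :: A2 :: A3 :: A4 :: Z) :=
          List.Perm.swap A1 b (b' :: A2 :: A3 :: A4 :: Z)
        have q3a : (b' :: A2 :: A3 :: A4 :: Z).Perm (b' :: A3 :: A2 :: A4 :: Z) :=
          (List.Perm.swap A3 A2 (A4 :: Z)).cons b'
        have q3b : (b' :: A3 :: A2 :: A4 :: Z).Perm (A3 :: b' :: A2 :: A4 :: Z) :=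
          List.Perm.swap A3 b' (A2 :: A4 :: Z)
        exact (q1.trans q2).trans (((q3a.trans q3b).cons b).cons A1)
      -- square-class comparison with the target
      have hfa : List.Forall₂ (SameSquareClass F)
          (c :: A1 :: b :: A3 :: b' :: A2 :: A4 :: Z)
          (c :: (-c) :: b :: (-b) :: b' :: (-b') :: c' :: Z) := by
        refine List.forall₂_cons.2 ⟨sqcl_refl c, ?_⟩
        refine List.forall₂_cons.2 ⟨by rw [hA1]; exact sqcl_refl (-c), ?_⟩
        refine List.forall₂_cons.2 ⟨sqcl_refl b, ?_⟩
        refine List.forall₂_cons.2 ⟨⟨c, hc, by rw [hA3]; ring⟩, ?_⟩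
        refine List.forall₂_cons.2 ⟨sqcl_refl b', ?_⟩
        refine List.forall₂_cons.2 ⟨⟨c, hc, by rw [hA2]; ring⟩, ?_⟩
        refine List.forall₂_cons.2 ⟨⟨c, hc, by rw [hA4, hc'def]; ring⟩, ?_⟩
        exact List.forall₂_same.2 fun x _ => sqcl_refl x
      have hiso : Isom F ((c :: b :: b' :: r') ++ negList F ((τ :: L').flatten))
          (c :: (-c) :: b :: (-b) :: b' :: (-b') :: c' :: Z) := isom_sp hperm hfa
      have htgt : IsHyp F (c :: (-c) :: b :: (-b) :: b' :: (-b') :: c' :: Z) := by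
        have h0 : IsHyp F ((c' :: r') ++ NF) := hL'hyp
        have h0' : IsHyp F (c' :: Z) := by
          rw [hZ]
          exact h0
        have h1 : IsHyp F ([b', -b'] ++ (c' :: Z)) := isHyp_pair_cons h2 hb' h0'
        have h1' : IsHyp F ([b, -b] ++ (b' :: -b' :: c' :: Z)) := isHyp_pair_cons h2 hb h1
        exact isHyp_pair_cons h2 hc h1'
      exact isHyp_of_isom hiso htgt

end PN




theorem stmt_2 (F : Type*) [Field F] (hF : (2 : F) ≠ 0)
    (φ : List F) (hφ : PN.Nondeg F φ) (hI : PN.InI F 2 φ) :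
    PN.GPnum F 2 φ ≤ ((φ.length / 2 - 1 : ℕ) : ℕ∞) := by
  obtain ⟨m, hm, e, he, hsq⟩ := PN.key_invariant hF hI
  match φ, hφ, hm, hsq with
  | [], hφ, hm, hsq =>
    refine le_trans (sInf_le ?_) zero_le
    refine ⟨[], by norm_num, by simp, ?_⟩
    show PN.IsHyp F (([] : List F) ++ PN.negList F ([] : List (List F)).flatten)
    exact ⟨0, PN.isom_refl _⟩
  | a :: r, hφ, hm, hsq =>
    have ha : a ≠ 0 := hφ a (by simp)
    have hndr : PN.Nondeg F r := fun x hx => hφ x (by simp [hx])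
    rw [List.length_cons] at hm
    have hm1 : 1 ≤ m := by omega
    have hsq' : (-1 : F) ^ ((r.length + 1) / 2) * (a * r.prod) = e ^ 2 := by
      have hexp : (r.length + 1) / 2 = m := by omega
      rw [hexp]
      rw [List.prod_cons] at hsq
      exact hsq
    obtain ⟨L, hLlen, hLgp, hLhyp⟩ := PN.main_rec hF r.length r rfl a ha hndr
      (by omega) ⟨e, he, hsq'⟩
    refine le_trans (sInf_le ⟨L, rfl, hLgp, hLhyp⟩) ?_
    have hle : L.length ≤ (a :: r).length / 2 - 1 := by
      rw [hLlen, List.length_cons]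
      omega
    exact_mod_cast Nat.cast_le.2 hle
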